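/- The implication connective is not definable from ¬, ∨, ∧, ⊤ in Gödel–Dummett logic: no →-free formula in atoms p, q has the same forcing set as p → q in every connected finite Kripke model. Witness: in the model K = {a,b,c} with b ≽ a, b ≽ c, a ⊩ p, b ⊩ p,q, both b and c force p → q but a does not, while every →-free formula forced at both b and c is forced at a. -/

import Mathlib

inductive Fm (α : Type) : Type where
  | top  : Fm α
  | atom : α → Fm α
  | neg  : Fm α → Fm α
  | and  : Fm α → Fm α → Fm α
  | or   : Fm α → Fm α → Fm α
  | imp  : Fm α → Fm α → Fm α

structure KripkeModel (α : Type) : Type 1 where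
  K : Type
  le : K → K → Prop
  refl : ∀ k, le k k
  trans : ∀ {a b c}, le a b → le b c → le a c
  antisymm : ∀ {a b}, le a b → le b a → a = b
  val : K → α → Prop
  persist : ∀ {k k' p}, le k k' → val k p → val k' p

def force {α : Type} (M : KripkeModel α) : M.K → Fm α → Prop
  | _, .top => True
  | k, .atom p => M.val k p
  | k, .neg φ => ∀ k', M.le k k' → ¬ force M k' φ
  | k, .and φ ψ => force M k φ ∧ force M k ψ
  | k, .or φ ψ => force M k φ ∨ force M k ψ
  | k, .imp φ ψ => ∀ k', M.le k k' → force M k' φ → force M k' ψ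

/-- →-free formulas: built using only ¬, ∨, ∧, ⊤ and atoms. -/
def NoImp {α : Type} : Fm α → Prop
  | .top => True
  | .atom _ => True
  | .neg φ => NoImp φ
  | .and φ ψ => NoImp φ ∧ NoImp ψ
  | .or φ ψ => NoImp φ ∧ NoImp ψ
  | .imp _ _ => False

/-- A Kripke model is connected when any two nodes above a common node are
comparable. -/
def Connected {α : Type} (M : KripkeModel α) : Prop :=
  ∀ k k' k'' : M.K, M.le k k' → M.le k k'' → M.le k' k'' ∨ M.le k'' k'

theorem force_persist {α : Type} (M : KripkeModel α) :
    ∀ (φ : Fm α) {k k' : M.K}, M.le k k' → force M k φ → force M k' φ := by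
  intro φ
  induction φ with
  | top => intro k k' _ _; trivial
  | atom p => intro k k' h hv; exact M.persist h hv
  | neg φ ih => intro k k' h hf k'' h''; exact hf k'' (M.trans h h'')
  | and φ ψ ihφ ihψ =>
      intro k k' h hf; exact ⟨ihφ h hf.1, ihψ h hf.2⟩
  | or φ ψ ihφ ihψ =>
      intro k k' h hf
      cases hf with
      | inl h1 => exact Or.inl (ihφ h h1)
      | inr h2 => exact Or.inr (ihψ h h2)
  | imp φ ψ _ _ =>
      intro k k' h hf k'' h'' hφ; exact hf k'' (M.trans h h'') hφ

def Mw : KripkeModel (Fin 2) where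
  K := Fin 3
  le := fun x y => x = y ∨ y = 1
  refl := fun k => Or.inl rfl
  trans := by intro a b c; revert a b c; decide
  antisymm := by intro a b; revert a b; decide
  val := fun k i => (i = 0 ∧ k ≠ 2) ∨ (i = 1 ∧ k = 1)
  persist := by intro k k' p; revert k k' p; decide

instance (n : ℕ) : OfNat Mw.K n := inferInstanceAs (OfNat (Fin 3) n)
instance : Fintype Mw.K := inferInstanceAs (Fintype (Fin 3))
instance : DecidableEq Mw.K := inferInstanceAs (DecidableEq (Fin 3))
instance (a b : Mw.K) : Decidable (Mw.le a b) :=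
  inferInstanceAs (Decidable (a = b ∨ b = 1))

lemma key : ∀ θ : Fm (Fin 2), NoImp θ →
    force Mw 1 θ → force Mw 2 θ → force Mw 0 θ := by
  intro θ
  induction θ with
  | top => intro _ _ _; trivial
  | atom p =>
      intro _ _ h2
      rcases h2 with ⟨_, h⟩ | ⟨_, h⟩
      · exact absurd rfl h
      · exact absurd h (by decide : ¬ ((2:Fin 3) = 1))
  | neg φ ih =>
      intro _ h1 _ k' hk' hφ
      rcases hk' with h | h
      · exact h1 1 (Or.inr rfl) (force_persist Mw φ (k := k') (Or.inr rfl) hφ)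
      · exact h1 k' (Or.inl h.symm) hφ
  | and φ ψ ihφ ihψ =>
      intro hn h1 h2
      exact ⟨ihφ hn.1 h1.1 h2.1, ihψ hn.2 h1.2 h2.2⟩
  | or φ ψ ihφ ihψ =>
      intro hn h1 h2
      rcases h2 with h2 | h2
      · rcases h1 with h1 | h1
        · exact Or.inl (ihφ hn.1 h1 h2)
        · exact Or.inl (ihφ hn.1 (force_persist Mw φ (k := (2:Fin 3)) (Or.inr rfl) h2) h2)
      · rcases h1 with h1 | h1
        · exact Or.inr (ihψ hn.2 (force_persist Mw ψ (k := (2:Fin 3)) (Or.inr rfl) h2) h2)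
        · exact Or.inr (ihψ hn.2 h1 h2)
  | imp φ ψ _ _ => intro hn; exact absurd hn id

/-- Implication is not definable from ¬, ∨, ∧, ⊤ in Gödel–Dummett logic: no
→-free formula in the atoms p = 0, q = 1 is forced at exactly the same nodes as
p → q in every connected finite Kripke model. -/
theorem imp_not_definable_GDL :
    ¬ ∃ θ : Fm (Fin 2), NoImp θ ∧
      ∀ (M : KripkeModel (Fin 2)), Fintype M.K → Connected M →
        ∀ k : M.K, (force M k θ ↔ force M k (Fm.imp (Fm.atom 0) (Fm.atom 1))) := by
  rintro ⟨θ, hNI, hθ⟩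
  have conn : Connected Mw := by intro k k' k''; revert k k' k''; decide
  have fin : Fintype Mw.K := inferInstanceAs (Fintype (Fin 3))
  have hb : force Mw 1 (Fm.imp (Fm.atom 0) (Fm.atom 1)) := by
    intro k' hk' _
    have : k' = 1 := by rcases hk' with h | h; exact h.symm; exact h
    subst this
    exact Or.inr ⟨rfl, rfl⟩
  have hc : force Mw 2 (Fm.imp (Fm.atom 0) (Fm.atom 1)) := by
    intro k' hk' hp
    rcases hk' with h | h
    · exfalso; subst h
      rcases hp with ⟨_, h⟩ | ⟨h, _⟩
      · exact h rfl
      · exact absurd h (by decide)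
    · subst h; exact Or.inr ⟨rfl, rfl⟩
  have ha : force Mw 0 θ := key θ hNI ((hθ Mw fin conn 1).mpr hb) ((hθ Mw fin conn 2).mpr hc)
  have h0 : force Mw 0 (Fm.imp (Fm.atom 0) (Fm.atom 1)) := (hθ Mw fin conn 0).mp ha
  have := h0 0 (Or.inl rfl) (Or.inl ⟨rfl, (by decide : (0:Fin 3) ≠ 2)⟩)
  rcases this with ⟨h, _⟩ | ⟨_, h⟩
  · exact absurd h (by decide)
  · exact absurd h (by decide : ¬ ((0:Fin 3) = 1))
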